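/- Let p ∈ [0.9, 1), define r(z) = p - p^{2^z} + z·2^z·p^{2^z}·ln 2·ln p, and set z_m = -log₂(-ln p). Then r(z_m) = (-1 + e·p + ln(-ln p))/e, and r(z_m) < 0. -/

import Mathlib

/-- For `p ∈ [0.9,1)`, `r(z) = p - p^{2^z} + z 2^z p^{2^z} ln 2 ln p` and
`z_m = -log₂(-ln p)`: `r(z_m) = (-1 + e p + ln(-ln p))/e` and `r(z_m) < 0`. -/
theorem stmt_14 (p : ℝ) (hp : p ∈ Set.Ico (0.9:ℝ) 1)
    (r : ℝ → ℝ)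
    (hr : ∀ z : ℝ, r z = p - p ^ ((2:ℝ) ^ z) +
      z * (2:ℝ) ^ z * p ^ ((2:ℝ) ^ z) * Real.log 2 * Real.log p) :
    r (-Real.logb 2 (-Real.log p)) =
      (-1 + Real.exp 1 * p + Real.log (-Real.log p)) / Real.exp 1 ∧
    r (-Real.logb 2 (-Real.log p)) < 0 := by
  obtain ⟨hp0, hp1⟩ := hp
  have hppos : (0:ℝ) < p := lt_of_lt_of_le (by norm_num) hp0
  set t : ℝ := -Real.log p with ht_def
  have hlogneg : Real.log p < 0 := Real.log_neg hppos hp1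
  have ht : 0 < t := by simp [ht_def]; linarith
  have htne : t ≠ 0 := ne_of_gt ht
  -- 2 ^ (-logb 2 t) = t⁻¹
  have h2pow : (2:ℝ) ^ (-Real.logb 2 t) = t⁻¹ := by
    rw [Real.rpow_neg (by norm_num), Real.rpow_logb (by norm_num) (by norm_num) ht]
  -- p ^ (t⁻¹) = exp (-1)
  have hppow : p ^ (t⁻¹ : ℝ) = Real.exp (-1) := by
    rw [Real.rpow_def_of_pos hppos]
    congr 1
    field_simp [ht_def]
    linarith
  have hlog2 : Real.log 2 ≠ 0 := by
    have := Real.log_pos (by norm_num : (1:ℝ) < 2); linarith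
  have hepos : (0:ℝ) < Real.exp 1 := Real.exp_pos 1
  -- main equality
  have heq : r (-Real.logb 2 t) =
      (-1 + Real.exp 1 * p + Real.log t) / Real.exp 1 := by
    rw [hr, h2pow, hppow]
    have hexpinv : Real.exp (-1) = (Real.exp 1)⁻¹ := by
      rw [Real.exp_neg]
    rw [Real.logb, hexpinv, ht_def]
    rw [Real.log_neg_eq_log]
    have hlogpne : Real.log p ≠ 0 := ne_of_lt hlogneg
    field_simp
    ring
  refine ⟨heq, ?_⟩
  rw [heq]
  apply div_neg_of_neg_of_pos _ hepos
  -- need -1 + e p + log t < 0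
  have he3 : Real.exp 1 < 3 := by
    have := Real.exp_one_lt_d9; linarith
  have hep : Real.exp 1 * p < Real.exp 1 := by nlinarith
  -- t ≤ 1/9
  have ht19 : t ≤ 1/9 := by
    have h1 : Real.log p ≥ Real.log 0.9 := Real.log_le_log (by norm_num) hp0
    have h2 : Real.log 0.9 = -Real.log (10/9) := by
      rw [show (0.9:ℝ) = (10/9)⁻¹ by norm_num, Real.log_inv]
    have h3 : Real.log (10/9) ≤ 10/9 - 1 := Real.log_le_sub_one_of_pos (by norm_num)
    simp [ht_def]
    rw [h2] at h1
    linarith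
  have hlogt : Real.log t ≤ Real.log (1/9) := Real.log_le_log ht ht19
  have hlog9 : (2:ℝ) ≤ Real.log 9 := by
    rw [Real.le_log_iff_exp_le (by norm_num)]
    have h := Real.exp_one_lt_d9
    calc Real.exp 2 = Real.exp 1 * Real.exp 1 := by
          rw [← Real.exp_add]; norm_num
      _ ≤ 9 := by nlinarith [Real.exp_pos 1]
  have : Real.log (1/9) = -Real.log 9 := by
    rw [one_div, Real.log_inv]
  linarith
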